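/- Let u, v ∈ L^p(Ω)ⁿ for a finite measure space Ω, 1 < p ≤ 2, and suppose ∫_Ω ⟨|u|^{p-2}u − |v|^{p-2}v, u − v⟩ dμ → 0 along a sequence while ∫_Ω (1 + |u| + |v|)^p dμ stays uniformly bounded. Then ∫_Ω |u − v|^p dμ → 0 along that sequence. More precisely: for any measurable u, v : Ω → ℝⁿ, ∫_Ω |u − v|^p dμ ≤ ( c ∫_Ω ⟨|u|^{p-2}u − |v|^{p-2}v, u − v⟩ dμ )^{p/2} · ( ∫_Ω (1 + |u| + |v|)^p dμ )^{(2-p)/2} for a constant c depending only on p. -/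

import Mathlib

open MeasureTheory Real RealInnerProductSpace

section AuxLemmas

lemma aux_rpow_mul_self {a : ℝ} (ha : 0 ≤ a) {q : ℝ} (hq : q + 1 ≠ 0) :
    a ^ q * a = a ^ (q + 1) := by
  rcases eq_or_lt_of_le ha with h | h
  · rw [← h, Real.zero_rpow hq]; simp
  · rw [Real.rpow_add_one (ne_of_gt h)]

lemma aux_core (p : ℝ) (hp1 : 1 < p) (hp2 : p ≤ 2) {a b : ℝ} (hb : 0 ≤ b) (hba : b ≤ a) :
    (p - 1) * a ^ (p - 2) * (a - b) ≤ a ^ (p - 1) - b ^ (p - 1) := by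
  have ha : 0 ≤ a := hb.trans hba
  rcases eq_or_lt_of_le ha with h | h
  · have hb0 : b = 0 := le_antisymm (h ▸ hba) hb
    rw [← h, hb0]
    norm_num
  · set t : ℝ := b / a with ht
    have ht0 : 0 ≤ t := div_nonneg hb h.le
    have hbt : b = a * t := by rw [ht]; field_simp
    have hamgm : t ^ (p-1) * 1 ^ (2-p) ≤ (p-1) * t + (2-p) * 1 :=
      Real.geom_mean_le_arith_mean2_weighted (by linarith) (by linarith) ht0 zero_le_one
        (by ring)
    rw [Real.one_rpow, mul_one, mul_one] at hamgm
    -- b^(p-1) = a^(p-1) * t^(p-1)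
    have hb_pow : b ^ (p-1) = a ^ (p-1) * t ^ (p-1) := by
      rw [hbt, Real.mul_rpow h.le ht0]
    -- a^(p-2) * (a - b) = a^(p-1) * (1 - t)
    have ha_pow : a ^ (p-2) * (a - b) = a ^ (p-1) * (1 - t) := by
      have h1 : a ^ (p-2) * a = a ^ (p-1) := by
        have := aux_rpow_mul_self h.le (q := p - 2) (by intro hc; linarith)
        rw [this]; ring_nf
      calc a ^ (p-2) * (a - b) = (a ^ (p-2) * a) * (1 - t) := by rw [hbt]; ring
        _ = a ^ (p-1) * (1 - t) := by rw [h1]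
    have hapos : 0 < a ^ (p-1) := Real.rpow_pos_of_pos h _
    rw [hb_pow]
    have key : (p - 1) * (1 - t) ≤ 1 - t ^ (p - 1) := by linarith
    calc (p-1) * a ^ (p-2) * (a-b) = a ^ (p-1) * ((p-1)*(1-t)) := by
          rw [mul_assoc, ha_pow]; ring
      _ ≤ a ^ (p-1) * (1 - t ^ (p-1)) := by
          exact mul_le_mul_of_nonneg_left key hapos.le
      _ = a ^ (p-1) - a ^ (p-1) * t ^ (p-1) := by ring

lemma aux_ep_sorted (p : ℝ) (hp1 : 1 < p) (hp2 : p ≤ 2) {a b : ℝ} (hb : 0 ≤ b) (hba : b ≤ a) :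
    ((p-1)/2) * (a*a + b*b - 2*(a*b)) * (1+a+b) ^ (p-2) ≤
      a ^ (p-2) * (a*a) + b ^ (p-2) * (b*b) - (a ^ (p-2) + b ^ (p-2)) * (a*b) := by
  have ha : 0 ≤ a := hb.trans hba
  rcases eq_or_lt_of_le ha with h | h
  · have hb0 : b = 0 := le_antisymm (h ▸ hba) hb
    rw [← h, hb0]; norm_num
  · have hA1 : a ^ (p-2) * a = a ^ (p-1) := by
      have := aux_rpow_mul_self h.le (q := p-2) (by intro hc; linarith)
      rw [this]; ring_nf
    have hB1 : b ^ (p-2) * b = b ^ (p-1) := by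
      rcases eq_or_lt_of_le hb with hb' | hb'
      · rw [← hb', mul_zero, Real.zero_rpow (show p - 1 ≠ 0 by intro hc; linarith)]
      · have := aux_rpow_mul_self hb'.le (q := p-2) (by intro hc; linarith)
        rw [this]; ring_nf
    have hre : a ^ (p-2) * (a*a) + b ^ (p-2) * (b*b) - (a ^ (p-2) + b ^ (p-2)) * (a*b)
        = (a ^ (p-1) - b ^ (p-1)) * (a - b) := by
      rw [← hA1, ← hB1]; ring
    rw [hre]
    have hcore := aux_core p hp1 hp2 hb hba
    have hK : (1+a+b) ^ (p-2) ≤ a ^ (p-2) :=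
      Real.rpow_le_rpow_of_nonpos h (by linarith) (by linarith)
    have hKpos : (0:ℝ) < (1+a+b) ^ (p-2) := Real.rpow_pos_of_pos (by linarith) _
    have hab : 0 ≤ a - b := by linarith
    have c1 : (p-1) * a ^ (p-2) * (a-b) * (a-b) ≤ (a ^ (p-1) - b ^ (p-1)) * (a-b) :=
      mul_le_mul_of_nonneg_right hcore hab
    have c2 : (p-1) * (1+a+b) ^ (p-2) * (a-b) * (a-b) ≤ (p-1) * a ^ (p-2) * (a-b) * (a-b) := by
      have := mul_le_mul_of_nonneg_left hK (by linarith : (0:ℝ) ≤ p - 1)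
      nlinarith [sq_nonneg (a-b)]
    nlinarith [mul_nonneg (mul_nonneg (by linarith : (0:ℝ) ≤ (p-1)/2) hKpos.le) (sq_nonneg (a-b))]

lemma aux_em_sorted (p : ℝ) (hp1 : 1 < p) (hp2 : p ≤ 2) {a b : ℝ} (hb : 0 ≤ b) (hba : b ≤ a) :
    ((p-1)/2) * (a*a + b*b + 2*(a*b)) * (1+a+b) ^ (p-2) ≤
      a ^ (p-2) * (a*a) + b ^ (p-2) * (b*b) + (a ^ (p-2) + b ^ (p-2)) * (a*b) := by
  have ha : 0 ≤ a := hb.trans hba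
  rcases eq_or_lt_of_le ha with h | h
  · have hb0 : b = 0 := le_antisymm (h ▸ hba) hb
    rw [← h, hb0]; norm_num
  · have hA1 : a ^ (p-2) * a = a ^ (p-1) := by
      have := aux_rpow_mul_self h.le (q := p-2) (by intro hc; linarith)
      rw [this]; ring_nf
    have hB1 : b ^ (p-2) * b = b ^ (p-1) := by
      rcases eq_or_lt_of_le hb with hb' | hb'
      · rw [← hb', mul_zero, Real.zero_rpow (show p - 1 ≠ 0 by intro hc; linarith)]
      · have := aux_rpow_mul_self hb'.le (q := p-2) (by intro hc; linarith)
        rw [this]; ring_nf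
    have hre : a ^ (p-2) * (a*a) + b ^ (p-2) * (b*b) + (a ^ (p-2) + b ^ (p-2)) * (a*b)
        = (a ^ (p-1) + b ^ (p-1)) * (a + b) := by
      rw [← hA1, ← hB1]; ring
    rw [hre]
    have habpos : 0 < a + b := by linarith
    -- a^(p-1) ≥ (1/2) * (a+b) * K
    have hs : ((a+b)/2) ^ (p-1) ≤ a ^ (p-1) :=
      Real.rpow_le_rpow (by positivity) (by linarith) (by linarith)
    have hdiv : ((a+b)/2) ^ (p-1) = (a+b) ^ (p-1) / 2 ^ (p-1) :=
      Real.div_rpow habpos.le (by norm_num : (0:ℝ) ≤ 2) (p-1)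
    have h2p : (2:ℝ) ^ (p-1) ≤ 2 := by
      calc (2:ℝ) ^ (p-1) ≤ (2:ℝ) ^ (1:ℝ) :=
            Real.rpow_le_rpow_of_exponent_le one_le_two (by linarith)
        _ = 2 := Real.rpow_one 2
    have h2ppos : (0:ℝ) < 2 ^ (p-1) := Real.rpow_pos_of_pos two_pos _
    have hhalf : (a+b) ^ (p-1) / 2 ≤ a ^ (p-1) := by
      have : (a+b) ^ (p-1) / 2 ≤ (a+b) ^ (p-1) / 2 ^ (p-1) :=
        div_le_div_of_nonneg_left (Real.rpow_nonneg habpos.le _) h2ppos h2p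
      linarith [hdiv ▸ hs]
    have h3 : (a+b) ^ (p-1) = (a+b) ^ (p-2) * (a+b) := by
      have := aux_rpow_mul_self habpos.le (q := p-2) (by intro hc; linarith)
      rw [this]; ring_nf
    have h4 : (1+a+b) ^ (p-2) ≤ (a+b) ^ (p-2) :=
      Real.rpow_le_rpow_of_nonpos habpos (by linarith) (by linarith)
    have hKpos : (0:ℝ) < (1+a+b) ^ (p-2) := Real.rpow_pos_of_pos (by linarith) _
    have hb_pow : 0 ≤ b ^ (p-1) := Real.rpow_nonneg hb _
    -- a^(p-1) ≥ (1/2)*(a+b)*K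
    have key : (1/2) * (a+b) * (1+a+b) ^ (p-2) ≤ a ^ (p-1) := by
      have h5 : (1/2) * (a+b) * (1+a+b) ^ (p-2) ≤ (1/2) * (a+b) * (a+b) ^ (p-2) := by
        have := mul_le_mul_of_nonneg_left h4 (by linarith : (0:ℝ) ≤ (1/2) * (a+b))
        linarith [this]
      have h6 : (1/2) * (a+b) * (a+b) ^ (p-2) = (a+b) ^ (p-1) / 2 := by
        rw [h3]; ring
      linarith
    nlinarith [mul_le_mul_of_nonneg_right key habpos.le,
      mul_nonneg hb_pow habpos.le,
      mul_nonneg (mul_nonneg (by linarith : (0:ℝ) ≤ 2 - p) hKpos.le) (sq_nonneg (a+b))]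

lemma aux_ep (p : ℝ) (hp1 : 1 < p) (hp2 : p ≤ 2) {a b : ℝ} (ha : 0 ≤ a) (hb : 0 ≤ b) :
    ((p-1)/2) * (a*a + b*b - 2*(a*b)) * (1+a+b) ^ (p-2) ≤
      a ^ (p-2) * (a*a) + b ^ (p-2) * (b*b) - (a ^ (p-2) + b ^ (p-2)) * (a*b) := by
  rcases le_total b a with hba | hab
  · exact aux_ep_sorted p hp1 hp2 hb hba
  · have := aux_ep_sorted p hp1 hp2 ha hab
    have hcomm : (1+b+a : ℝ) = 1+a+b := by ring
    rw [hcomm] at this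
    linarith [this]

lemma aux_em (p : ℝ) (hp1 : 1 < p) (hp2 : p ≤ 2) {a b : ℝ} (ha : 0 ≤ a) (hb : 0 ≤ b) :
    ((p-1)/2) * (a*a + b*b + 2*(a*b)) * (1+a+b) ^ (p-2) ≤
      a ^ (p-2) * (a*a) + b ^ (p-2) * (b*b) + (a ^ (p-2) + b ^ (p-2)) * (a*b) := by
  rcases le_total b a with hba | hab
  · exact aux_em_sorted p hp1 hp2 hb hba
  · have := aux_em_sorted p hp1 hp2 ha hab
    have hcomm : (1+b+a : ℝ) = 1+a+b := by ring
    rw [hcomm] at this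
    linarith [this]

lemma aux_scalar (p : ℝ) (hp1 : 1 < p) (hp2 : p ≤ 2) {a b s : ℝ} (ha : 0 ≤ a) (hb : 0 ≤ b)
    (hs1 : -(a*b) ≤ s) (hs2 : s ≤ a*b) :
    ((p-1)/2) * (a*a + b*b - 2*s) * (1+a+b) ^ (p-2) ≤
      a ^ (p-2) * (a*a) + b ^ (p-2) * (b*b) - (a ^ (p-2) + b ^ (p-2)) * s := by
  have hP := aux_ep p hp1 hp2 ha hb
  have hM := aux_em p hp1 hp2 ha hb
  rcases le_total 0 ((p-1) * (1+a+b) ^ (p-2) - (a ^ (p-2) + b ^ (p-2))) with hm | hm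
  · nlinarith [mul_le_mul_of_nonneg_left hs1 hm]
  · nlinarith [mul_le_mul_of_nonpos_left hs2 hm]

open RealInnerProductSpace in
lemma aux_vec {E : Type*} [NormedAddCommGroup E] [InnerProductSpace ℝ E]
    (p : ℝ) (hp1 : 1 < p) (hp2 : p ≤ 2) (x y : E) :
    ((p-1)/2) * ‖x - y‖^2 * (1+‖x‖+‖y‖) ^ (p-2) ≤
      ⟪(‖x‖ ^ (p-2)) • x - (‖y‖ ^ (p-2)) • y, x - y⟫ := by
  have hexp : ⟪(‖x‖ ^ (p-2)) • x - (‖y‖ ^ (p-2)) • y, x - y⟫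
      = ‖x‖ ^ (p-2) * (‖x‖*‖x‖) + ‖y‖ ^ (p-2) * (‖y‖*‖y‖)
        - (‖x‖ ^ (p-2) + ‖y‖ ^ (p-2)) * ⟪x, y⟫ := by
    simp only [inner_sub_left, inner_sub_right, real_inner_smul_left,
      real_inner_self_eq_norm_mul_norm, real_inner_comm y x]
    ring
  have hnorm : ‖x - y‖^2 = ‖x‖*‖x‖ + ‖y‖*‖y‖ - 2*⟪x, y⟫ := by
    rw [norm_sub_sq_real]; ring
  rw [hexp, hnorm]
  exact aux_scalar p hp1 hp2 (norm_nonneg x) (norm_nonneg y)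
    (neg_le_of_abs_le (abs_real_inner_le_norm x y))
    (le_of_abs_le (abs_real_inner_le_norm x y))

open RealInnerProductSpace in
lemma aux_bound {E : Type*} [NormedAddCommGroup E] [InnerProductSpace ℝ E]
    (p : ℝ) (hp1 : 1 < p) (hp2 : p ≤ 2) (x y : E) :
    |⟪(‖x‖ ^ (p-2)) • x - (‖y‖ ^ (p-2)) • y, x - y⟫| ≤ 2 * (1+‖x‖+‖y‖) ^ p := by
  set h : ℝ := 1 + ‖x‖ + ‖y‖ with hh
  have hpos : (0:ℝ) < h := by positivity
  have h1 : ‖(‖x‖ ^ (p-2)) • x - (‖y‖ ^ (p-2)) • y‖ ≤ ‖x‖ ^ (p-1) + ‖y‖ ^ (p-1) := by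
    refine (norm_sub_le _ _).trans ?_
    rw [norm_smul, norm_smul, Real.norm_of_nonneg (Real.rpow_nonneg (norm_nonneg x) _),
      Real.norm_of_nonneg (Real.rpow_nonneg (norm_nonneg y) _),
      aux_rpow_mul_self (norm_nonneg x) (show p - 2 + 1 ≠ 0 by intro hc; linarith),
      aux_rpow_mul_self (norm_nonneg y) (show p - 2 + 1 ≠ 0 by intro hc; linarith)]
    norm_num
    ring_nf
    exact le_refl _
  have h2 : ‖x‖ ^ (p-1) ≤ h ^ (p-1) :=
    Real.rpow_le_rpow (norm_nonneg x) (by rw [hh]; linarith [norm_nonneg y]) (by linarith)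
  have h3 : ‖y‖ ^ (p-1) ≤ h ^ (p-1) :=
    Real.rpow_le_rpow (norm_nonneg y) (by rw [hh]; linarith [norm_nonneg x]) (by linarith)
  have h4 : ‖x - y‖ ≤ h := by
    refine (norm_sub_le x y).trans ?_
    rw [hh]; linarith
  have h5 : h ^ (p-1) * h = h ^ p := by
    rw [aux_rpow_mul_self hpos.le (show p - 1 + 1 ≠ 0 by intro hc; linarith)]
    ring_nf
  calc |⟪(‖x‖ ^ (p-2)) • x - (‖y‖ ^ (p-2)) • y, x - y⟫|
      ≤ ‖(‖x‖ ^ (p-2)) • x - (‖y‖ ^ (p-2)) • y‖ * ‖x - y‖ := abs_real_inner_le_norm _ _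
    _ ≤ (‖x‖ ^ (p-1) + ‖y‖ ^ (p-1)) * ‖x - y‖ := by
        apply mul_le_mul_of_nonneg_right h1 (norm_nonneg _)
    _ ≤ (h ^ (p-1) + h ^ (p-1)) * h := by
        have hnn : 0 ≤ ‖x‖ ^ (p-1) + ‖y‖ ^ (p-1) :=
          add_nonneg (Real.rpow_nonneg (norm_nonneg x) _) (Real.rpow_nonneg (norm_nonneg y) _)
        exact mul_le_mul (by linarith) h4 (norm_nonneg _) (by positivity)
    _ = 2 * (h ^ (p-1) * h) := by ring
    _ = 2 * h ^ p := by rw [h5]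

end AuxLemmas

theorem stmt_10 (p : ℝ) (hp1 : 1 < p) (hp2 : p ≤ 2) :
    ∃ c : ℝ, 0 < c ∧
      ∀ (Ω : Type) (_ : MeasurableSpace Ω) (μ : Measure Ω), IsFiniteMeasure μ →
      ∀ (n : ℕ) (u v : Ω → EuclideanSpace ℝ (Fin n)),
        Measurable u → Measurable v →
        MemLp u (ENNReal.ofReal p) μ → MemLp v (ENNReal.ofReal p) μ →
        (∫ ω, ‖u ω - v ω‖ ^ p ∂μ) ≤
          (c * ∫ ω, ⟪(‖u ω‖ ^ (p - 2)) • u ω - (‖v ω‖ ^ (p - 2)) • v ω, u ω - v ω⟫ ∂μ)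
              ^ (p / 2) *
            (∫ ω, (1 + ‖u ω‖ + ‖v ω‖) ^ p ∂μ) ^ ((2 - p) / 2) := by
  have hp0 : 0 < p := by linarith
  refine ⟨2 / (p - 1), div_pos two_pos (by linarith), ?_⟩
  intro Ω mΩ μ hfin n u v hu hv huLp hvLp
  -- notation
  set W : Ω → ℝ := fun ω => ⟪(‖u ω‖ ^ (p - 2)) • u ω - (‖v ω‖ ^ (p - 2)) • v ω, u ω - v ω⟫
    with hWdef
  set h : Ω → ℝ := fun ω => 1 + ‖u ω‖ + ‖v ω‖ with hhdef
  set G : Ω → ℝ := fun ω => h ω ^ p with hGdef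
  set F : Ω → ℝ := fun ω => ‖u ω - v ω‖ ^ 2 * h ω ^ (p - 2) with hFdef
  have hhpos : ∀ ω, (0:ℝ) < h ω := fun ω => by
    simp only [hhdef]; positivity
  -- measurability
  have hh_meas : Measurable h := (measurable_const.add hu.norm).add hv.norm
  have hW_meas : Measurable W := by
    apply Measurable.inner
    · exact ((hu.norm.pow_const (p-2)).smul hu).sub ((hv.norm.pow_const (p-2)).smul hv)
    · exact hu.sub hv
  have hF_meas : Measurable F :=
    ((hu.sub hv).norm.pow_const 2).mul (hh_meas.pow_const (p-2))
  -- integrability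
  have hhLp : MemLp h (ENNReal.ofReal p) μ :=
    ((memLp_const (1:ℝ)).add huLp.norm).add hvLp.norm
  have hG_int : Integrable G μ := by
    have := hhLp.integrable_norm_rpow (by simp only [ne_eq, ENNReal.ofReal_eq_zero, not_le]; exact hp0) ENNReal.ofReal_ne_top
    rw [ENNReal.toReal_ofReal hp0.le] at this
    refine this.congr (Filter.Eventually.of_forall fun ω => ?_)
    show ‖h ω‖ ^ p = G ω
    rw [Real.norm_of_nonneg (hhpos ω).le]
  have hW_int : Integrable W μ := by
    refine Integrable.mono' (hG_int.const_mul 2) hW_meas.aestronglyMeasurable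
      (Filter.Eventually.of_forall fun ω => ?_)
    rw [Real.norm_eq_abs]
    exact aux_bound p hp1 hp2 (u ω) (v ω)
  have hFG : ∀ ω, F ω ≤ G ω := by
    intro ω
    have hd : ‖u ω - v ω‖ ≤ h ω := by
      refine (norm_sub_le _ _).trans ?_
      simp only [hhdef]; linarith
    have hd2 : ‖u ω - v ω‖ ^ 2 ≤ h ω ^ 2 :=
      pow_le_pow_left₀ (norm_nonneg _) hd 2
    have he : h ω ^ 2 * h ω ^ (p-2) = h ω ^ p := by
      have e1 : h ω ^ (p-2) * h ω = h ω ^ (p-1) := by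
        rw [aux_rpow_mul_self (hhpos ω).le (show p - 2 + 1 ≠ 0 by intro hc; linarith)]
        ring_nf
      have e2 : h ω ^ (p-1) * h ω = h ω ^ p := by
        rw [aux_rpow_mul_self (hhpos ω).le (show p - 1 + 1 ≠ 0 by intro hc; linarith)]
        ring_nf
      calc h ω ^ 2 * h ω ^ (p-2) = h ω ^ (p-2) * h ω * h ω := by ring
        _ = h ω ^ (p-1) * h ω := by rw [e1]
        _ = h ω ^ p := e2
    calc F ω = ‖u ω - v ω‖ ^ 2 * h ω ^ (p-2) := rfl
      _ ≤ h ω ^ 2 * h ω ^ (p-2) :=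
          mul_le_mul_of_nonneg_right hd2 (Real.rpow_nonneg (hhpos ω).le _)
      _ = G ω := he
  have hF_nonneg : ∀ ω, 0 ≤ F ω := fun ω =>
    mul_nonneg (sq_nonneg _) (Real.rpow_nonneg (hhpos ω).le _)
  have hF_int : Integrable F μ := by
    refine Integrable.mono' hG_int hF_meas.aestronglyMeasurable
      (Filter.Eventually.of_forall fun ω => ?_)
    rw [Real.norm_of_nonneg (hF_nonneg ω)]
    exact hFG ω
  -- pointwise monotonicity
  have hWF : ∀ ω, ((p-1)/2) * F ω ≤ W ω := by
    intro ω
    have := aux_vec p hp1 hp2 (u ω) (v ω)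
    simp only [hWdef, hFdef, hhdef]
    linarith [this]
  -- integral comparison
  have hIF_nonneg : 0 ≤ ∫ ω, F ω ∂μ := integral_nonneg hF_nonneg
  have hIG_nonneg : 0 ≤ ∫ ω, G ω ∂μ :=
    integral_nonneg fun ω => Real.rpow_nonneg (hhpos ω).le _
  have hIntW : ((p-1)/2) * ∫ ω, F ω ∂μ ≤ ∫ ω, W ω ∂μ := by
    rw [← integral_const_mul]
    exact integral_mono (hF_int.const_mul _) hW_int hWF
  have hc : ∫ ω, F ω ∂μ ≤ (2 / (p-1)) * ∫ ω, W ω ∂μ := by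
    have hpm : (0:ℝ) < p - 1 := by linarith
    have : (2 / (p-1)) * (((p-1)/2) * ∫ ω, F ω ∂μ) ≤ (2 / (p-1)) * ∫ ω, W ω ∂μ :=
      mul_le_mul_of_nonneg_left hIntW (by positivity)
    calc ∫ ω, F ω ∂μ = (2 / (p-1)) * (((p-1)/2) * ∫ ω, F ω ∂μ) := by
          field_simp
      _ ≤ (2 / (p-1)) * ∫ ω, W ω ∂μ := this
  rcases lt_or_eq_of_le hp2 with hplt | hpeq
  · -- case p < 2
    -- pointwise factorization
    have hpt : ∀ ω, ‖u ω - v ω‖ ^ p = F ω ^ (p/2) * G ω ^ ((2-p)/2) := by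
      intro ω
      set d : ℝ := ‖u ω - v ω‖ with hd
      have hd0 : (0:ℝ) ≤ d := norm_nonneg _
      have hH := hhpos ω
      have hd2 : (d ^ 2 : ℝ) = d ^ (2:ℝ) := by
        rw [← Real.rpow_natCast d 2]; norm_num
      calc d ^ p = d ^ ((2:ℝ) * (p/2)) * h ω ^ ((p-2) * (p/2) + p * ((2-p)/2)) := by
            rw [show (2:ℝ) * (p/2) = p by ring, show (p-2) * (p/2) + p * ((2-p)/2) = 0 by ring,
              Real.rpow_zero, mul_one]
        _ = (d ^ (2:ℝ)) ^ (p/2) * (h ω ^ ((p-2) * (p/2)) * h ω ^ (p * ((2-p)/2))) := by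
            rw [Real.rpow_mul hd0, ← Real.rpow_add hH]
        _ = (d ^ (2:ℝ)) ^ (p/2) * ((h ω ^ (p-2)) ^ (p/2) * (h ω ^ p) ^ ((2-p)/2)) := by
            rw [← Real.rpow_mul hH.le (p-2) (p/2), ← Real.rpow_mul hH.le p ((2-p)/2)]
        _ = F ω ^ (p/2) * G ω ^ ((2-p)/2) := by
            simp only [hFdef, hGdef]
            rw [Real.mul_rpow (by positivity) (by positivity), hd2]
            ring
    have hpq : Real.HolderConjugate (2/p) (2/(2-p)) := by
      constructor
      · rw [inv_div, inv_div, inv_one]; ring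
      · exact div_pos two_pos hp0
      · exact div_pos two_pos (by linarith)
    -- MemLp for the two factors
    have hr1 : (0:ℝ) < p * (p/2) := by positivity
    have hr2 : (0:ℝ) < p * ((2-p)/2) := by
      have : (0:ℝ) < 2 - p := by linarith
      positivity
    have hD1 : MemLp (fun ω => h ω ^ (p * (p/2))) (ENNReal.ofReal (2/p)) μ := by
      have := hhLp.norm_rpow_div (ENNReal.ofReal (p * (p/2)))
      rw [ENNReal.toReal_ofReal hr1.le] at this
      rw [← ENNReal.ofReal_div_of_pos hr1, show p / (p * (p/2)) = 2/p by rw [div_eq_div_iff hr1.ne' hp0.ne']; ring]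
        at this
      refine this.of_le (hh_meas.pow_const _).aestronglyMeasurable
        (Filter.Eventually.of_forall fun ω => ?_)
      rw [Real.norm_of_nonneg (hhpos ω).le]
    have hD2 : MemLp (fun ω => h ω ^ (p * ((2-p)/2))) (ENNReal.ofReal (2/(2-p))) μ := by
      have := hhLp.norm_rpow_div (ENNReal.ofReal (p * ((2-p)/2)))
      rw [ENNReal.toReal_ofReal hr2.le] at this
      rw [← ENNReal.ofReal_div_of_pos hr2,
        show p / (p * ((2-p)/2)) = 2/(2-p) by rw [div_eq_div_iff hr2.ne' (show (2:ℝ)-p ≠ 0 by intro hc; linarith)]; ring] at this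
      refine this.of_le (hh_meas.pow_const _).aestronglyMeasurable
        (Filter.Eventually.of_forall fun ω => ?_)
      rw [Real.norm_of_nonneg (hhpos ω).le]
    have hmF : MemLp (fun ω => F ω ^ (p/2)) (ENNReal.ofReal (2/p)) μ := by
      refine hD1.of_le (hF_meas.pow_const (p/2)).aestronglyMeasurable
        (Filter.Eventually.of_forall fun ω => ?_)
      rw [Real.norm_of_nonneg (Real.rpow_nonneg (hF_nonneg ω) _),
        Real.norm_of_nonneg (Real.rpow_nonneg (hhpos ω).le _)]
      calc F ω ^ (p/2) ≤ G ω ^ (p/2) :=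
            Real.rpow_le_rpow (hF_nonneg ω) (hFG ω) (by positivity)
        _ = h ω ^ (p * (p/2)) := by rw [hGdef, ← Real.rpow_mul (hhpos ω).le]
    have hmG : MemLp (fun ω => G ω ^ ((2-p)/2)) (ENNReal.ofReal (2/(2-p))) μ := by
      refine hD2.of_le ((hh_meas.pow_const p).pow_const ((2-p)/2)).aestronglyMeasurable
        (Filter.Eventually.of_forall fun ω => ?_)
      rw [Real.norm_of_nonneg (Real.rpow_nonneg (Real.rpow_nonneg (hhpos ω).le _) _),
        Real.norm_of_nonneg (Real.rpow_nonneg (hhpos ω).le _)]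
      rw [← Real.rpow_mul (hhpos ω).le]
    -- Hölder
    have hHolder := integral_mul_le_Lp_mul_Lq_of_nonneg hpq
      (Filter.Eventually.of_forall fun ω => Real.rpow_nonneg (hF_nonneg ω) _)
      (Filter.Eventually.of_forall fun ω => Real.rpow_nonneg (Real.rpow_nonneg (hhpos ω).le _) _)
      hmF hmG
    have hsimpF : ∀ ω, (F ω ^ (p/2)) ^ (2/p) = F ω := by
      intro ω
      rw [← Real.rpow_mul (hF_nonneg ω), show (p/2) * (2/p) = 1 by field_simp, Real.rpow_one]
    have hsimpG : ∀ ω, (G ω ^ ((2-p)/2)) ^ (2/(2-p)) = G ω := by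
      intro ω
      have h2p : (2:ℝ) - p ≠ 0 := by intro hc; linarith
      rw [← Real.rpow_mul (Real.rpow_nonneg (hhpos ω).le _),
        show ((2-p)/2) * (2/(2-p)) = 1 by field_simp, Real.rpow_one]
    rw [integral_congr_ae (Filter.Eventually.of_forall hsimpF),
      integral_congr_ae (Filter.Eventually.of_forall hsimpG), one_div_div, one_div_div] at hHolder
    -- assemble
    calc (∫ ω, ‖u ω - v ω‖ ^ p ∂μ)
        = ∫ ω, F ω ^ (p/2) * G ω ^ ((2-p)/2) ∂μ :=
          integral_congr_ae (Filter.Eventually.of_forall hpt)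
      _ ≤ (∫ ω, F ω ∂μ) ^ (p/2) * (∫ ω, G ω ∂μ) ^ ((2-p)/2) := hHolder
      _ ≤ ((2/(p-1)) * ∫ ω, W ω ∂μ) ^ (p/2) * (∫ ω, G ω ∂μ) ^ ((2-p)/2) := by
          refine mul_le_mul_of_nonneg_right ?_ (Real.rpow_nonneg hIG_nonneg _)
          exact Real.rpow_le_rpow hIF_nonneg hc (by positivity)
  · -- case p = 2
    subst hpeq
    have hWd : ∀ ω, W ω = ‖u ω - v ω‖ ^ (2:ℝ) := by
      intro ω
      simp only [hWdef, show (2:ℝ) - 2 = 0 by norm_num, Real.rpow_zero, one_smul]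
      rw [real_inner_self_eq_norm_mul_norm, show (2:ℝ) = ((2:ℕ):ℝ) by norm_num,
        Real.rpow_natCast]
      ring
    have hL_nonneg : 0 ≤ ∫ ω, ‖u ω - v ω‖ ^ (2:ℝ) ∂μ :=
      integral_nonneg fun ω => Real.rpow_nonneg (norm_nonneg _) _
    rw [show ((2:ℝ)-2)/2 = 0 by norm_num, Real.rpow_zero, show (2:ℝ)/2 = 1 by norm_num,
      Real.rpow_one, mul_one, show (2:ℝ)/(2-1) = 2 by norm_num]
    have hIW : ∫ ω, W ω ∂μ = ∫ ω, ‖u ω - v ω‖ ^ (2:ℝ) ∂μ :=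
      integral_congr_ae (Filter.Eventually.of_forall hWd)
    rw [hIW]
    linarith
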